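/- The pair (x₁³x₂², x₁(x₁⁴+x₂³) + x₂(x₁⁴+x₂³)) is a regular sequence in ℚ[x₁,x₂]. -/

import Mathlib

open MvPolynomial

/-- `(a₁, a₂)` is a regular sequence in the commutative ring `R`:
`a₁` is not a zero divisor in `R`, and the image of `a₂` is not a zero divisor
in `R ⧸ (a₁)`. -/
def IsRegularPair {R : Type*} [CommRing R] (a₁ a₂ : R) : Prop :=
  (∀ c : R, a₁ * c = 0 → c = 0) ∧
    (∀ c : R ⧸ Ideal.span {a₁},
      Ideal.Quotient.mk (Ideal.span {a₁}) a₂ * c = 0 → c = 0)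

lemma primeX0 : Prime (X 0 : MvPolynomial (Fin 2) ℚ) := by
  rw [← MulEquiv.prime_iff (MvPolynomial.finSuccEquiv ℚ 1).toMulEquiv]
  simpa [MvPolynomial.finSuccEquiv_X_zero] using Polynomial.prime_X

lemma primeX1 : Prime (X 1 : MvPolynomial (Fin 2) ℚ) := by
  have h1 : (X 1 : MvPolynomial (Fin 2) ℚ) = X (Fin.succ 0) := rfl
  rw [h1, ← MulEquiv.prime_iff (MvPolynomial.finSuccEquiv ℚ 1).toMulEquiv]
  have : (MvPolynomial.finSuccEquiv ℚ 1) (X (Fin.succ 0)) = Polynomial.C (X 0) :=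
    MvPolynomial.finSuccEquiv_X_succ
  rw [show ((MvPolynomial.finSuccEquiv ℚ 1).toMulEquiv (X (Fin.succ 0))) =
      Polynomial.C (X 0) from this]
  rw [Polynomial.prime_C_iff]
  rw [← MulEquiv.prime_iff (MvPolynomial.finSuccEquiv ℚ 0).toMulEquiv]
  simpa [MvPolynomial.finSuccEquiv_X_zero] using Polynomial.prime_X

lemma notdvd0 :
    ¬ (X 0 : MvPolynomial (Fin 2) ℚ) ∣
      (X 0 * ((X 0) ^ 4 + (X 1) ^ 3) + X 1 * ((X 0) ^ 4 + (X 1) ^ 3)) := by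
  intro h
  have := map_dvd (aeval (![0, X 1] : Fin 2 → MvPolynomial (Fin 2) ℚ)) h
  simp only [map_add, map_mul, map_pow, AlgHom.toRingHom_eq_coe, RingHom.coe_coe, AlgHom.coe_toRingHom, aeval_X,
    Matrix.cons_val_zero, Matrix.cons_val_one, Matrix.head_cons] at this
  have h2 : (X 1 : MvPolynomial (Fin 2) ℚ) ^ 4 = 0 := by
    obtain ⟨q, hq⟩ := this
    linear_combination hq
  exact pow_ne_zero 4 (X_ne_zero 1) h2

lemma notdvd1 :
    ¬ (X 1 : MvPolynomial (Fin 2) ℚ) ∣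
      (X 0 * ((X 0) ^ 4 + (X 1) ^ 3) + X 1 * ((X 0) ^ 4 + (X 1) ^ 3)) := by
  intro h
  have := map_dvd (aeval (![X 0, 0] : Fin 2 → MvPolynomial (Fin 2) ℚ)) h
  simp only [map_add, map_mul, map_pow, AlgHom.toRingHom_eq_coe, RingHom.coe_coe, AlgHom.coe_toRingHom, aeval_X,
    Matrix.cons_val_zero, Matrix.cons_val_one, Matrix.head_cons] at this
  have h2 : (X 0 : MvPolynomial (Fin 2) ℚ) ^ 5 = 0 := by
    obtain ⟨q, hq⟩ := this
    linear_combination hq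
  exact pow_ne_zero 5 (X_ne_zero 0) h2

theorem stmt7 :
    IsRegularPair (R := MvPolynomial (Fin 2) ℚ)
      ((X 0) ^ 3 * (X 1) ^ 2) (X 0 * ((X 0) ^ 4 + (X 1) ^ 3) + X 1 * ((X 0) ^ 4 + (X 1) ^ 3)) := by
  set a₁ : MvPolynomial (Fin 2) ℚ := (X 0) ^ 3 * (X 1) ^ 2 with ha₁
  set a₂ : MvPolynomial (Fin 2) ℚ :=
    X 0 * ((X 0) ^ 4 + (X 1) ^ 3) + X 1 * ((X 0) ^ 4 + (X 1) ^ 3) with ha₂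
  have ha₁ne : a₁ ≠ 0 :=
    mul_ne_zero (pow_ne_zero _ (X_ne_zero 0)) (pow_ne_zero _ (X_ne_zero 1))
  constructor
  · intro c hc
    rcases mul_eq_zero.mp hc with h | h
    · exact absurd h ha₁ne
    · exact h
  · intro c hc
    obtain ⟨d, rfl⟩ := Ideal.Quotient.mk_surjective c
    rw [← map_mul, Ideal.Quotient.eq_zero_iff_mem, Ideal.mem_span_singleton] at hc
    rw [Ideal.Quotient.eq_zero_iff_mem, Ideal.mem_span_singleton]
    -- hc : a₁ ∣ a₂ * d
    have h03 : (X 0 : MvPolynomial (Fin 2) ℚ) ^ 3 ∣ a₂ * d :=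
      dvd_trans (dvd_mul_right _ _) hc
    have hd0 : (X 0 : MvPolynomial (Fin 2) ℚ) ^ 3 ∣ d :=
      primeX0.pow_dvd_of_dvd_mul_left 3 notdvd0 h03
    obtain ⟨e, rfl⟩ := hd0
    have h12 : (X 1 : MvPolynomial (Fin 2) ℚ) ^ 2 ∣ (a₂ * X 0 ^ 3) * e := by
      have : (X 1 : MvPolynomial (Fin 2) ℚ) ^ 2 ∣ a₂ * (X 0 ^ 3 * e) :=
        dvd_trans (dvd_mul_left _ _) hc
      rwa [← mul_assoc] at this
    have hnd : ¬ (X 1 : MvPolynomial (Fin 2) ℚ) ∣ a₂ * X 0 ^ 3 := by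
      intro h
      rcases (primeX1.dvd_mul).mp h with h | h
      · exact notdvd1 h
      · rcases primeX1.dvd_of_dvd_pow h with ⟨q, hq⟩
        have := (aeval (![X 0, 0] : Fin 2 → MvPolynomial (Fin 2) ℚ)).toRingHom.congr_arg hq
        simp only [map_mul, AlgHom.toRingHom_eq_coe, RingHom.coe_coe, aeval_X,
          Matrix.cons_val_zero, Matrix.cons_val_one, Matrix.head_cons, zero_mul] at this
        exact X_ne_zero 0 this
    have he : (X 1 : MvPolynomial (Fin 2) ℚ) ^ 2 ∣ e :=
      primeX1.pow_dvd_of_dvd_mul_left 2 hnd h12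
    obtain ⟨f, rfl⟩ := he
    exact ⟨f, by ring⟩
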